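/- In the GLM setting, the empirical variance of the loss vector satisfies var(θ) := (1/N)·Σ_{i=1}^N (f_i(θ) − (1/N)·Σ_{j=1}^N f_j(θ))² = θᵀ·V₀·θ, where V₀ := (1/N)·Σ_{i=1}^N (T_i − T̄)(T_i − T̄)ᵀ and T̄ := (1/N)·Σ_{i=1}^N T_i. Moreover, if θ̆ : ℝ → ℝ^d is a differentiable curve of stationary solutions (∇A(θ̆(τ)) = M(τ;θ̆(τ)) for all τ) with H(τ) := ∇²A(θ̆(τ)) + τ·V(τ;θ̆(τ)) invertible, then d/dτ [var(θ̆(τ))] = −2·θ̆(τ)ᵀ·V(τ;θ̆(τ))·H(τ)^{-1}·V₀·θ̆(τ). -/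

import Mathlib

open Real Finset

/-- Empirical log-partition function `Γ(t;θ) = log((1/N)·Σᵢ exp(−t·⟨θ,Tᵢ⟩))`. -/
noncomputable def glmGamma {d N : ℕ} (T : Fin N → EuclideanSpace ℝ (Fin d)) (t : ℝ)
    (θ : EuclideanSpace ℝ (Fin d)) : ℝ :=
  Real.log ((1 / (N : ℝ)) * ∑ i, Real.exp (-t * (inner ℝ θ (T i) : ℝ)))

/-- Tilted empirical mean `M(t;θ) = (1/N)·Σᵢ Tᵢ·exp(−t·⟨θ,Tᵢ⟩ − Γ(t;θ))`. -/
noncomputable def glmM {d N : ℕ} (T : Fin N → EuclideanSpace ℝ (Fin d)) (t : ℝ)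
    (θ : EuclideanSpace ℝ (Fin d)) : EuclideanSpace ℝ (Fin d) :=
  ∑ i, ((1 / (N : ℝ)) * Real.exp (-t * (inner ℝ θ (T i) : ℝ) - glmGamma T t θ)) • T i

/-- Tilted empirical covariance `V(t;θ)` of the sufficient statistic, as a linear operator. -/
noncomputable def glmV {d N : ℕ} (T : Fin N → EuclideanSpace ℝ (Fin d)) (t : ℝ)
    (θ : EuclideanSpace ℝ (Fin d)) :
    EuclideanSpace ℝ (Fin d) →L[ℝ] EuclideanSpace ℝ (Fin d) :=
  ∑ i, ((1 / (N : ℝ)) * Real.exp (-t * (inner ℝ θ (T i) : ℝ) - glmGamma T t θ)) •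
    ((innerSL ℝ (T i - glmM T t θ)).smulRight (T i - glmM T t θ))

/-- The untilted empirical covariance `V₀ = (1/N)·Σᵢ (Tᵢ − T̄)(Tᵢ − T̄)ᵀ`, with
`T̄ = (1/N)·Σᵢ Tᵢ`, as a linear operator. -/
noncomputable def glmV0 {d N : ℕ} (T : Fin N → EuclideanSpace ℝ (Fin d)) :
    EuclideanSpace ℝ (Fin d) →L[ℝ] EuclideanSpace ℝ (Fin d) :=
  ∑ i, ((1 / (N : ℝ)) : ℝ) •
    ((innerSL ℝ (T i - (1 / (N : ℝ)) • ∑ j, T j)).smulRight (T i - (1 / (N : ℝ)) • ∑ j, T j))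

/-- Empirical variance of the GLM loss vector `(f₁(θ),…,f_N(θ))`, `fᵢ(θ) = A(θ) − ⟨θ,Tᵢ⟩`. -/
noncomputable def glmLossVariance {d N : ℕ} (T : Fin N → EuclideanSpace ℝ (Fin d))
    (A : EuclideanSpace ℝ (Fin d) → ℝ) (θ : EuclideanSpace ℝ (Fin d)) : ℝ :=
  (1 / (N : ℝ)) * ∑ i, ((A θ - (inner ℝ θ (T i) : ℝ)) -
    (1 / (N : ℝ)) * ∑ j, (A θ - (inner ℝ θ (T j) : ℝ))) ^ 2


noncomputable def isoR (d : ℕ) :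
    StrongDual ℝ (EuclideanSpace ℝ (Fin d)) ≃ₗᵢ[ℝ] EuclideanSpace ℝ (Fin d) where
  toFun φ := (InnerProductSpace.toDual ℝ _).symm φ
  invFun x := InnerProductSpace.toDual ℝ _ x
  map_add' φ ψ := by simp
  map_smul' r φ := by simp
  left_inv φ := by simp
  right_inv x := by simp
  norm_map' φ := by simp

lemma gradient_eq_isoR {d : ℕ} (A : EuclideanSpace ℝ (Fin d) → ℝ) :
    gradient A = (isoR d) ∘ (fderiv ℝ A) := rfl

lemma gradient_differentiable {d : ℕ} (A : EuclideanSpace ℝ (Fin d) → ℝ)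
    (hA : ContDiff ℝ 2 A) : Differentiable ℝ (gradient A) := by
  rw [gradient_eq_isoR]
  exact (isoR d).differentiable.comp ((hA.fderiv_right (m := 1) (by norm_num)).differentiable one_ne_zero)

lemma hess_symm {d : ℕ} (A : EuclideanSpace ℝ (Fin d) → ℝ) (hA : ContDiff ℝ 2 A)
    (x u v : EuclideanSpace ℝ (Fin d)) :
    (inner ℝ (fderiv ℝ (gradient A) x u) v : ℝ) = inner ℝ u (fderiv ℝ (gradient A) x v) := by
  have h1 : ContDiff ℝ 1 (fderiv ℝ A) := hA.fderiv_right (by norm_num)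
  have hfd : fderiv ℝ (gradient A) x
      = ((isoR d) : _ →L[ℝ] _).comp (fderiv ℝ (fderiv ℝ A) x) := by
    rw [gradient_eq_isoR]; exact (isoR d).comp_fderiv
  have hsym := second_derivative_symmetric (f := A) (f' := fderiv ℝ A)
    (fun y => ((hA.differentiable (by norm_num)) y).hasFDerivAt)
    ((h1.differentiable one_ne_zero x).hasFDerivAt) u v
  rw [hfd]
  simp only [ContinuousLinearMap.comp_apply, ContinuousLinearMap.coe_coe]
  show (inner ℝ ((InnerProductSpace.toDual ℝ _).symm (fderiv ℝ (fderiv ℝ A) x u)) v : ℝ)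
    = inner ℝ u ((InnerProductSpace.toDual ℝ _).symm (fderiv ℝ (fderiv ℝ A) x v))
  rw [InnerProductSpace.toDual_symm_apply, real_inner_comm,
    InnerProductSpace.toDual_symm_apply]
  exact hsym


lemma glmV_symm {d N : ℕ} (T : Fin N → EuclideanSpace ℝ (Fin d)) (t : ℝ)
    (θ x y : EuclideanSpace ℝ (Fin d)) :
    (inner ℝ (glmV T t θ x) y : ℝ) = inner ℝ x (glmV T t θ y) := by
  simp only [glmV, ContinuousLinearMap.sum_apply, sum_inner, inner_sum,
    ContinuousLinearMap.smul_apply, ContinuousLinearMap.smulRight_apply, innerSL_apply_apply,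
    real_inner_smul_left, real_inner_smul_right, inner_smul_left, inner_smul_right]
  refine Finset.sum_congr rfl fun i _ => ?_
  simp only [RCLike.inner_apply, conj_trivial]
  rw [real_inner_comm x]
  ring

lemma glmV0_symm {d N : ℕ} (T : Fin N → EuclideanSpace ℝ (Fin d))
    (x y : EuclideanSpace ℝ (Fin d)) :
    (inner ℝ (glmV0 T x) y : ℝ) = inner ℝ x (glmV0 T y) := by
  simp only [glmV0, ContinuousLinearMap.sum_apply, sum_inner, inner_sum,
    ContinuousLinearMap.smul_apply, ContinuousLinearMap.smulRight_apply, innerSL_apply_apply,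
    real_inner_smul_left, real_inner_smul_right, inner_smul_left, inner_smul_right]
  refine Finset.sum_congr rfl fun i _ => ?_
  simp only [RCLike.inner_apply, conj_trivial]
  rw [real_inner_comm x]
  ring

lemma glm_var_eq {d N : ℕ} (hN : 0 < N) (T : Fin N → EuclideanSpace ℝ (Fin d))
    (A : EuclideanSpace ℝ (Fin d) → ℝ) (θ : EuclideanSpace ℝ (Fin d)) :
    glmLossVariance T A θ = (inner ℝ θ (glmV0 T θ) : ℝ) := by
  have hN' : (N : ℝ) ≠ 0 := Nat.cast_ne_zero.mpr hN.ne'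
  have hcard : (1 / (N:ℝ)) * ∑ _j : Fin N, A θ = A θ := by
    simp [Finset.sum_const, mul_comm]
    field_simp
  rw [glmLossVariance, glmV0]
  rw [ContinuousLinearMap.sum_apply, inner_sum, Finset.mul_sum]
  refine Finset.sum_congr rfl fun i _ => ?_
  rw [ContinuousLinearMap.smul_apply, ContinuousLinearMap.smulRight_apply, innerSL_apply_apply,
    inner_smul_right, real_inner_smul_right]
  have h1 : (A θ - (inner ℝ θ (T i) : ℝ)) -
      (1 / (N : ℝ)) * ∑ j, (A θ - (inner ℝ θ (T j) : ℝ))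
      = - (inner ℝ θ (T i - (1 / (N : ℝ)) • ∑ j, T j) : ℝ) := by
    rw [inner_sub_right, real_inner_smul_right, inner_sum, Finset.sum_sub_distrib,
      mul_sub, hcard]
    ring
  rw [h1, real_inner_comm θ (T i - _)]
  ring

lemma glmM_curve_hasDerivAt {d N : ℕ} (hN : 0 < N)
    (T : Fin N → EuclideanSpace ℝ (Fin d))
    (θb : ℝ → EuclideanSpace ℝ (Fin d)) (hθ : Differentiable ℝ θb) (τ : ℝ) :
    HasDerivAt (fun s => glmM T s (θb s))
      (-(glmV T τ (θb τ)) (θb τ + τ • deriv θb τ)) τ := by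
  have hNe : Nonempty (Fin N) := Fin.pos_iff_nonempty.mp hN
  have hN' : (0:ℝ) < 1 / (N:ℝ) := by positivity
  set p := deriv θb τ with hp
  set x := θb τ + τ • p with hx
  set c : Fin N → ℝ := fun i => -(inner ℝ x (T i) : ℝ) with hcdef
  -- derivative of inner products
  have hginner : ∀ i, HasDerivAt (fun s => (inner ℝ (θb s) (T i) : ℝ))
      ((inner ℝ p (T i) : ℝ)) τ := by
    intro i
    have := HasDerivAt.inner ℝ ((hθ τ).hasDerivAt) (hasDerivAt_const τ (T i))
    simpa using this
  have hg : ∀ i, HasDerivAt (fun s => -s * (inner ℝ (θb s) (T i) : ℝ)) (c i) τ := by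
    intro i
    have := ((hasDerivAt_id τ).fun_neg).fun_mul (hginner i)
    refine this.congr_deriv ?_
    simp only [hcdef, hx, inner_add_left, real_inner_smul_left, id_eq]
    ring
  have he : ∀ i, HasDerivAt (fun s => Real.exp (-s * (inner ℝ (θb s) (T i) : ℝ)))
      (Real.exp (-τ * (inner ℝ (θb τ) (T i) : ℝ)) * c i) τ := fun i => (hg i).exp
  set Ssum : ℝ → ℝ := fun s => (1 / (N:ℝ)) * ∑ i, Real.exp (-s * (inner ℝ (θb s) (T i) : ℝ))
    with hSsum
  have hS : HasDerivAt Ssum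
      ((1 / (N:ℝ)) * ∑ i, Real.exp (-τ * (inner ℝ (θb τ) (T i) : ℝ)) * c i) τ :=
    (HasDerivAt.fun_sum fun i _ => he i).const_mul _
  have hSpos : 0 < Ssum τ := by
    apply mul_pos hN'
    exact Finset.sum_pos (fun i _ => Real.exp_pos _) Finset.univ_nonempty
  set Γ' : ℝ := ((1 / (N:ℝ)) * ∑ i, Real.exp (-τ * (inner ℝ (θb τ) (T i) : ℝ)) * c i) / Ssum τ
    with hΓ'def
  have hΓ : HasDerivAt (fun s => glmGamma T s (θb s)) Γ' τ := hS.log hSpos.ne'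
  set w : Fin N → ℝ :=
    fun i => (1 / (N:ℝ)) * Real.exp (-τ * (inner ℝ (θb τ) (T i) : ℝ) - glmGamma T τ (θb τ))
    with hwdef
  have hw : ∀ i, HasDerivAt
      (fun s => (1 / (N:ℝ)) * Real.exp (-s * (inner ℝ (θb s) (T i) : ℝ) - glmGamma T s (θb s)))
      (w i * (c i - Γ')) τ := by
    intro i
    have := (((hg i).sub hΓ).exp).const_mul (1 / (N:ℝ))
    refine this.congr_deriv ?_
    simp only [hwdef, Pi.sub_apply]
    ring
  have hM : HasDerivAt (fun s => glmM T s (θb s)) (∑ i, (w i * (c i - Γ')) • T i) τ := by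
    have := HasDerivAt.fun_sum (fun i (_ : i ∈ Finset.univ) => (hw i).smul_const (T i))
    simpa [glmM] using this
  -- algebraic identification of the derivative
  have hexplog : Real.exp (glmGamma T τ (θb τ)) = Ssum τ := Real.exp_log hSpos
  have hwS : ∀ i, w i = (1 / (N:ℝ)) * Real.exp (-τ * (inner ℝ (θb τ) (T i) : ℝ)) / Ssum τ := by
    intro i
    show (1 / (N:ℝ)) * Real.exp (-τ * (inner ℝ (θb τ) (T i) : ℝ) - glmGamma T τ (θb τ)) = _
    rw [Real.exp_sub, hexplog]
    ring
  have hsumw : ∑ i, w i = 1 := by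
    rw [Finset.sum_congr rfl fun i _ => hwS i]
    rw [← Finset.sum_div, ← Finset.mul_sum]
    exact div_self hSpos.ne'
  have hΓ'w : Γ' = ∑ i, w i * c i := by
    have h4 : ∀ i:Fin N, w i * c i
        = (1 / (N:ℝ)) * (Real.exp (-τ * (inner ℝ (θb τ) (T i):ℝ)) * c i) / Ssum τ := by
      intro i; rw [hwS i]; ring
    rw [Finset.sum_congr rfl fun i _ => h4 i, ← Finset.sum_div, ← Finset.mul_sum]
  have hMw : glmM T τ (θb τ) = ∑ i, w i • T i := rfl
  set M := glmM T τ (θb τ) with hM0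
  have hc : ∀ i, c i - Γ' = -(inner ℝ (T i - M) x : ℝ) := by
    intro i
    have h1 : (inner ℝ (T i - M) x : ℝ) = (inner ℝ x (T i) : ℝ) - (inner ℝ x M : ℝ) := by
      rw [real_inner_comm, inner_sub_right]
    have h2 : (inner ℝ x M : ℝ) = ∑ j, w j * (inner ℝ x (T j) : ℝ) := by
      rw [hMw, inner_sum]
      exact Finset.sum_congr rfl fun j _ => real_inner_smul_right _ _ _
    have h3 : Γ' = -(inner ℝ x M : ℝ) := by
      rw [hΓ'w, h2, ← Finset.sum_neg_distrib]
      refine Finset.sum_congr rfl fun j _ => ?_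
      show w j * -(inner ℝ x (T j) : ℝ) = -(w j * (inner ℝ x (T j) : ℝ))
      ring
    rw [h1, h3]
    show -(inner ℝ x (T i) : ℝ) - _ = _
    ring
  have hzero : ∑ i, w i * (c i - Γ') = 0 := by
    simp only [mul_sub]
    rw [Finset.sum_sub_distrib, ← Finset.sum_mul, hsumw, hΓ'w]
    ring
  have hexpand : (glmV T τ (θb τ)) x = ∑ i, (w i * (inner ℝ (T i - M) x : ℝ)) • (T i - M) := by
    simp only [glmV, ContinuousLinearMap.sum_apply, ContinuousLinearMap.smul_apply,
      ContinuousLinearMap.smulRight_apply, innerSL_apply_apply, ← hM0, ← hwdef, smul_smul]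
    rfl
  have key : ∑ i, (w i * (c i - Γ')) • T i = -(glmV T τ (θb τ)) x := by
    rw [hexpand, ← Finset.sum_neg_distrib]
    have : ∀ i:Fin N, -((w i * (inner ℝ (T i - M) x : ℝ)) • (T i - M))
        = (w i * (c i - Γ')) • T i - (w i * (c i - Γ')) • M := by
      intro i
      rw [← smul_sub, ← neg_smul, hc i]
      congr 1; ring
    rw [Finset.sum_congr rfl fun i _ => this i, Finset.sum_sub_distrib,
      ← Finset.sum_smul, hzero, zero_smul, sub_zero]
  rw [← key]
  exact hM


/-- **Empirical loss variance and its derivative along the solution path.** In the GLM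
setting, the empirical variance of the losses is the quadratic form `var(θ) = θᵀ·V₀·θ`.
Moreover, if `θ̆` is a differentiable curve of stationary solutions
(`∇A(θ̆(τ)) = M(τ;θ̆(τ))`) with `H(τ) = ∇²A(θ̆(τ)) + τ·V(τ;θ̆(τ))` two-sidedly invertible,
then `d/dτ var(θ̆(τ)) = −2·θ̆(τ)ᵀ·V(τ;θ̆(τ))·H(τ)⁻¹·V₀·θ̆(τ)`. -/
theorem glm_variance_formula_and_derivative {d N : ℕ} (hN : 0 < N)
    (T : Fin N → EuclideanSpace ℝ (Fin d))
    (A : EuclideanSpace ℝ (Fin d) → ℝ) (hA : ContDiff ℝ 2 A)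
    (θbreve : ℝ → EuclideanSpace ℝ (Fin d)) (hθ : Differentiable ℝ θbreve)
    (hstat : ∀ τ : ℝ, gradient A (θbreve τ) = glmM T τ (θbreve τ))
    (H Hinv : ℝ → EuclideanSpace ℝ (Fin d) →L[ℝ] EuclideanSpace ℝ (Fin d))
    (hH : ∀ τ : ℝ, H τ = fderiv ℝ (gradient A) (θbreve τ) + τ • glmV T τ (θbreve τ))
    (hHinv : ∀ τ : ℝ,
      (H τ).comp (Hinv τ) = ContinuousLinearMap.id ℝ (EuclideanSpace ℝ (Fin d)) ∧
      (Hinv τ).comp (H τ) = ContinuousLinearMap.id ℝ (EuclideanSpace ℝ (Fin d))) :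
    (∀ θ : EuclideanSpace ℝ (Fin d),
      glmLossVariance T A θ = (inner ℝ θ (glmV0 T θ) : ℝ)) ∧
    (∀ τ : ℝ, deriv (fun s => glmLossVariance T A (θbreve s)) τ =
      -2 * (inner ℝ (θbreve τ)
        (glmV T τ (θbreve τ) (Hinv τ (glmV0 T (θbreve τ)))) : ℝ)) := by
  constructor
  · exact fun θ => glm_var_eq hN T A θ
  · intro τ
    have hdg : Differentiable ℝ (gradient A) := gradient_differentiable A hA
    have hgradcurve : HasDerivAt (fun s => gradient A (θbreve s))
        (fderiv ℝ (gradient A) (θbreve τ) (deriv θbreve τ)) τ :=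
      ((hdg (θbreve τ)).hasFDerivAt).comp_hasDerivAt τ (hθ τ).hasDerivAt
    have hMcurve := glmM_curve_hasDerivAt hN T θbreve hθ τ
    have hfun : (fun s => gradient A (θbreve s)) = fun s => glmM T s (θbreve s) :=
      funext hstat
    rw [hfun] at hgradcurve
    have heq : fderiv ℝ (gradient A) (θbreve τ) (deriv θbreve τ)
        = -(glmV T τ (θbreve τ)) (θbreve τ + τ • deriv θbreve τ) :=
      hgradcurve.unique hMcurve
    set p := deriv θbreve τ with hpdef
    have hHp : H τ p = -(glmV T τ (θbreve τ) (θbreve τ)) := by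
      rw [hH τ]
      simp only [ContinuousLinearMap.add_apply, ContinuousLinearMap.smul_apply]
      rw [heq, map_add, map_smul]
      abel
    have happ1 : ∀ z, H τ (Hinv τ z) = z := by
      intro z
      have := congrArg (fun (L : EuclideanSpace ℝ (Fin d) →L[ℝ] EuclideanSpace ℝ (Fin d)) =>
        L z) (hHinv τ).1
      simpa using this
    have hp : p = -(Hinv τ (glmV T τ (θbreve τ) (θbreve τ))) := by
      have h2 := congrArg (fun (L : EuclideanSpace ℝ (Fin d) →L[ℝ] EuclideanSpace ℝ (Fin d)) =>
        L p) (hHinv τ).2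
      simp only [ContinuousLinearMap.comp_apply, ContinuousLinearMap.id_apply] at h2
      rw [← h2, hHp, map_neg]
    have symmH : ∀ u v : EuclideanSpace ℝ (Fin d),
        (inner ℝ (H τ u) v : ℝ) = inner ℝ u (H τ v) := by
      intro u v
      rw [hH τ]
      simp only [ContinuousLinearMap.add_apply, ContinuousLinearMap.smul_apply,
        inner_add_left, inner_add_right, real_inner_smul_left, real_inner_smul_right]
      rw [hess_symm A hA, glmV_symm]
    have symmHinv : ∀ u v : EuclideanSpace ℝ (Fin d),
        (inner ℝ (Hinv τ u) v : ℝ) = inner ℝ u (Hinv τ v) := by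
      intro u v
      calc (inner ℝ (Hinv τ u) v : ℝ)
          = inner ℝ (Hinv τ u) (H τ (Hinv τ v)) := by rw [happ1 v]
        _ = inner ℝ (H τ (Hinv τ u)) (Hinv τ v) := (symmH _ _).symm
        _ = inner ℝ u (Hinv τ v) := by rw [happ1 u]
    have hvfun : (fun s => glmLossVariance T A (θbreve s))
        = fun s => (inner ℝ (θbreve s) (glmV0 T (θbreve s)) : ℝ) :=
      funext fun s => glm_var_eq hN T A (θbreve s)
    have hV0curve : HasDerivAt (fun s => glmV0 T (θbreve s)) (glmV0 T p) τ :=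
      (glmV0 T).hasFDerivAt.comp_hasDerivAt τ (hθ τ).hasDerivAt
    have hvd : HasDerivAt (fun s => (inner ℝ (θbreve s) (glmV0 T (θbreve s)) : ℝ))
        ((inner ℝ (θbreve τ) (glmV0 T p) : ℝ) + inner ℝ p (glmV0 T (θbreve τ))) τ :=
      HasDerivAt.inner ℝ (hθ τ).hasDerivAt hV0curve
    rw [hvfun, hvd.deriv]
    have e1 : (inner ℝ (θbreve τ) (glmV0 T p) : ℝ) = inner ℝ p (glmV0 T (θbreve τ)) := by
      rw [← glmV0_symm, real_inner_comm]
    have e2 : (inner ℝ p (glmV0 T (θbreve τ)) : ℝ)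
        = -(inner ℝ (θbreve τ) (glmV T τ (θbreve τ) (Hinv τ (glmV0 T (θbreve τ)))) : ℝ) := by
      rw [hp, inner_neg_left, symmHinv, glmV_symm]
    rw [e1, e2]
    ring
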